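/- Let X be a compact Hausdorff space, μ = ⊕_{i=1}^n λ_i ⊙ δ_{x_i} ∈ I_f(X) with unique index i_0 such that λ_{i_0} = 0, let U_1, …, U_n be pairwise disjoint open neighborhoods of x_1, …, x_n respectively, and let 0 < ε < ln 3. Then for every point y ∈ U_{i_0}, the measure μ_y = 0 ⊙ δ_y ⊕ ⊕_{i ≠ i_0} λ_i ⊙ δ_{x_i} belongs to I_f(X), satisfies r(μ_y) = δ_y, and lies in the neighborhood ⟨μ; U_1, …, U_n; ε⟩ = {ν = ⊕_{j=1}^k γ_j ⊙ δ_{y_j} ∈ I_ω(X) : {y_j} ⊆ ∪_i U_i, {y_j} ∩ U_i ≠ ∅ for each i, and max{|λ_i − γ_j| : y_j ∈ U_i} < ε for each i}; consequently r maps ⟨μ; U_1, …, U_n; ε⟩ ∩ I_f(X) onto {δ_y : y ∈ U_{i_0}}. -/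

import Mathlib

open Real Set Topology

/-- The Dirac measure `δ_x` on `X`, as a functional on `C(X, ℝ)`: `δ_x(φ) = φ(x)`. -/
def dirac (X : Type*) [TopologicalSpace X] (x : X) : C(X, ℝ) → ℝ := fun φ => φ x

/-- The max-plus combination `⊕_{i=1}^n λ_i ⊙ δ_{x_i}`, i.e. the functional
`φ ↦ max_{1 ≤ i ≤ n} (λ_i + φ(x_i))`. -/
noncomputable def maxPlus {X : Type*} [TopologicalSpace X] {n : ℕ}
    (lam : Fin n → ℝ) (x : Fin n → X) : C(X, ℝ) → ℝ :=
  fun φ => ⨆ i, (lam i + φ (x i))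

/-- `μ : C(X, ℝ) → ℝ` is an idempotent probability measure:
(1) `μ(c_λ) = λ` for constant functions; (2) `μ(λ + φ) = λ + μ(φ)`;
(3) `μ(max(φ, ψ)) = max(μ(φ), μ(ψ))`. -/
def IsIPM {X : Type*} [TopologicalSpace X] (μ : C(X, ℝ) → ℝ) : Prop :=
  (∀ c : ℝ, μ (ContinuousMap.const X c) = c) ∧
  (∀ (c : ℝ) (φ : C(X, ℝ)), μ (ContinuousMap.const X c + φ) = c + μ φ) ∧
  (∀ φ ψ : C(X, ℝ), μ (φ ⊔ ψ) = max (μ φ) (μ ψ))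

/-- Membership in `I_ω(X)`: idempotent probability measures with finite support, i.e.
`μ = ⊕_{i=1}^n λ_i ⊙ δ_{x_i}` with `x_i` pairwise distinct, `λ_i ≤ 0` and `max_i λ_i = 0`. -/
def IsFS {X : Type*} [TopologicalSpace X] (μ : C(X, ℝ) → ℝ) : Prop :=
  ∃ n : ℕ, 0 < n ∧ ∃ (x : Fin n → X) (lam : Fin n → ℝ),
    Function.Injective x ∧ (∀ i, lam i ≤ 0) ∧ (∃ i, lam i = 0) ∧ μ = maxPlus lam x

/-- Membership in `I_f(X)`: `μ = ⊕_{i=1}^n λ_i ⊙ δ_{x_i}` with `x_i` pairwise distinct,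
a unique index `i₀` with `λ_{i₀} = 0`, and `λ_i ≤ -ln(n+1)` for every `i ≠ i₀`. -/
def IsIf {X : Type*} [TopologicalSpace X] (μ : C(X, ℝ) → ℝ) : Prop :=
  ∃ n : ℕ, 0 < n ∧ ∃ (x : Fin n → X) (lam : Fin n → ℝ) (i0 : Fin n),
    Function.Injective x ∧ lam i0 = 0 ∧
    (∀ i, i ≠ i0 → lam i ≤ -Real.log (n + 1)) ∧ μ = maxPlus lam x

/-- The basic neighborhood `⟨μ; U_1, …, U_n; ε⟩` of `μ = ⊕_{i=1}^n λ_i ⊙ δ_{x_i}` in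
`I_ω(X)`: all `ν = ⊕_{j=1}^k γ_j ⊙ δ_{y_j} ∈ I_ω(X)` with support in `∪_i U_i`, meeting
every `U_i`, and with `max{|λ_i − γ_j| : y_j ∈ U_i} < ε` for each `i`. -/
def nbhd {X : Type*} [TopologicalSpace X] {n : ℕ} (lam : Fin n → ℝ)
    (U : Fin n → Set X) (ε : ℝ) : Set (C(X, ℝ) → ℝ) :=
  {ν | ∃ k : ℕ, 0 < k ∧ ∃ (y : Fin k → X) (gam : Fin k → ℝ),
    Function.Injective y ∧ (∀ j, gam j ≤ 0) ∧ (∃ j, gam j = 0) ∧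
    (∀ j, ∃ i, y j ∈ U i) ∧ (∀ i, ∃ j, y j ∈ U i) ∧
    (∀ i j, y j ∈ U i → |lam i - gam j| < ε) ∧ ν = maxPlus gam y}

/-- let `μ = ⊕_{i=1}^n λ_i ⊙ δ_{x_i} ∈ I_f(X)` with unique index `i₀` such
that `λ_{i₀} = 0`, let `U_1, …, U_n` be pairwise disjoint open neighborhoods of the `x_i`,
and let `0 < ε < ln 3`. Then for every `y ∈ U_{i₀}` the measure
`μ_y = 0 ⊙ δ_y ⊕ ⊕_{i ≠ i₀} λ_i ⊙ δ_{x_i}` belongs to `I_f(X)`, lies in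
`⟨μ; U_1, …, U_n; ε⟩`, and satisfies `r(μ_y) = δ_y`; consequently `r` maps
`⟨μ; U_1, …, U_n; ε⟩ ∩ I_f(X)` onto `{δ_y : y ∈ U_{i₀}}`. -/

lemma key_lemma {X : Type*} [TopologicalSpace X] [T2Space X] [NormalSpace X]
    {m k : ℕ} (hm : 0 < m) (hk : 0 < k)
    (z : Fin m → X) (c : Fin m → ℝ) (j0 : Fin m) (hc0 : c j0 = 0)
    (hcle : ∀ j, c j ≤ 0)
    (y : Fin k → X) (gam : Fin k → ℝ) (hg : ∀ j, gam j ≤ 0)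
    (heq : maxPlus c z = maxPlus gam y) :
    ∃ j, y j = z j0 ∧ gam j = 0 := by
  haveI : Nonempty (Fin m) := Fin.pos_iff_nonempty.mp hm
  haveI : Nonempty (Fin k) := Fin.pos_iff_nonempty.mp hk
  set S : Set X := (Set.range z ∪ Set.range y) \ {z j0} with hS
  have hSfin : S.Finite := ((Set.finite_range z).union (Set.finite_range y)).diff
  obtain ⟨f, hf0, hf1, hf01⟩ := exists_continuous_zero_one_of_isClosed
    (isClosed_singleton (x := z j0)) hSfin.isClosed
    (by rw [Set.disjoint_left]; rintro a rfl; simp [hS])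
  set φ : C(X, ℝ) := -f with hφ
  have hφle : ∀ p, φ p ≤ 0 := fun p => by
    simp only [hφ, ContinuousMap.neg_apply, neg_nonpos]; exact (hf01 p).1
  have hφ0 : φ (z j0) = 0 := by
    have := hf0 (Set.mem_singleton (z j0))
    simp only [hφ, ContinuousMap.neg_apply]
    simp_all
  have h1 : maxPlus c z φ = 0 := by
    apply le_antisymm
    · exact ciSup_le fun i => add_nonpos (hcle i) (hφle _)
    · have := le_ciSup (Set.Finite.bddAbove (Set.finite_range
        (fun i => c i + φ (z i)))) j0
      simpa [maxPlus, hc0, hφ0] using this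
  have h2 : maxPlus gam y φ = 0 := by rw [← heq]; exact h1
  obtain ⟨j, hj⟩ := Finite.exists_max (fun j => gam j + φ (y j))
  have hmax : maxPlus gam y φ = gam j + φ (y j) := by
    simp only [maxPlus]
    exact le_antisymm (ciSup_le hj)
      (le_ciSup (Set.Finite.bddAbove (Set.finite_range (fun j => gam j + φ (y j)))) j)
  have h3 : gam j + φ (y j) = 0 := by rw [← hmax, h2]
  have hgj : gam j = 0 := le_antisymm (hg j) (by linarith [hφle (y j)])
  have hφyj : φ (y j) = 0 := by linarith
  refine ⟨j, ?_, hgj⟩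
  by_contra hne
  have hmem : y j ∈ S := ⟨Or.inr ⟨j, rfl⟩, hne⟩
  have := hf1 hmem
  simp only [hφ, ContinuousMap.neg_apply] at hφyj
  simp_all

theorem stmt18 {X : Type*} [TopologicalSpace X] [CompactSpace X] [T2Space X]
    (r : {μ : C(X, ℝ) → ℝ // IsIf μ} → C(X, ℝ) → ℝ)
    (hr : ∀ (m : ℕ), 0 < m → ∀ (z : Fin m → X) (c : Fin m → ℝ) (j0 : Fin m),
      Function.Injective z → c j0 = 0 →
      (∀ j, j ≠ j0 → c j ≤ -Real.log (m + 1)) →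
      ∀ hμ : IsIf (maxPlus c z), r ⟨maxPlus c z, hμ⟩ = dirac X (z j0))
    {n : ℕ} (hn : 0 < n) (x : Fin n → X) (hx : Function.Injective x)
    (lam : Fin n → ℝ) (i0 : Fin n) (h0 : lam i0 = 0)
    (hle : ∀ i, i ≠ i0 → lam i ≤ -Real.log (n + 1))
    (U : Fin n → Set X) (hUopen : ∀ i, IsOpen (U i)) (hxU : ∀ i, x i ∈ U i)
    (hUdisj : ∀ i j, i ≠ j → Disjoint (U i) (U j))
    (ε : ℝ) (hε0 : 0 < ε) (hε3 : ε < Real.log 3) :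
    (∀ y ∈ U i0, ∃ h : IsIf (maxPlus lam (Function.update x i0 y)),
      maxPlus lam (Function.update x i0 y) ∈ nbhd lam U ε ∧
      r ⟨maxPlus lam (Function.update x i0 y), h⟩ = dirac X y) ∧
    (∀ ν : {μ : C(X, ℝ) → ℝ // IsIf μ}, ν.1 ∈ nbhd lam U ε →
      ∃ y ∈ U i0, r ν = dirac X y) ∧
    (∀ y ∈ U i0, ∃ ν : {μ : C(X, ℝ) → ℝ // IsIf μ},
      ν.1 ∈ nbhd lam U ε ∧ r ν = dirac X y) := by
  haveI : Nonempty (Fin n) := Fin.pos_iff_nonempty.mp hn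
  have hlamle : ∀ i, lam i ≤ 0 := by
    intro i
    by_cases h : i = i0
    · rw [h, h0]
    · exact (hle i h).trans (neg_nonpos.mpr (Real.log_nonneg (by push_cast; linarith)))
  have part1 : ∀ y ∈ U i0, ∃ h : IsIf (maxPlus lam (Function.update x i0 y)),
      maxPlus lam (Function.update x i0 y) ∈ nbhd lam U ε ∧
      r ⟨maxPlus lam (Function.update x i0 y), h⟩ = dirac X y := by
    intro y hy
    set x' := Function.update x i0 y with hx'
    have hx'i0 : x' i0 = y := Function.update_self i0 y x
    have hx'ne : ∀ i, i ≠ i0 → x' i = x i := fun i hi => Function.update_of_ne hi y x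
    have hx'U : ∀ j, x' j ∈ U j := by
      intro j
      by_cases h : j = i0
      · subst h; rw [hx'i0]; exact hy
      · rw [hx'ne j h]; exact hxU j
    have hinj : Function.Injective x' := by
      intro a b hab
      by_contra hne
      have := (hUdisj a b hne).ne_of_mem (hx'U a) (hx'U b)
      exact this hab
    have hIf : IsIf (maxPlus lam x') := ⟨n, hn, x', lam, i0, hinj, h0, hle, rfl⟩
    refine ⟨hIf, ?_, ?_⟩
    · refine ⟨n, hn, x', lam, hinj, hlamle, ⟨i0, h0⟩,
        fun j => ⟨j, hx'U j⟩, fun i => ⟨i, hx'U i⟩, ?_, rfl⟩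
      intro i j hij
      have hij' : i = j := by
        by_contra hne
        exact (hUdisj i j hne).ne_of_mem hij (hx'U j) rfl
      subst hij'
      simpa using hε0
    · rw [hr n hn x' lam i0 hinj h0 hle hIf, hx'i0]
  refine ⟨part1, ?_, ?_⟩
  · intro ν hν
    obtain ⟨m, hm, z, c, j0, hzinj, hc0, hcle, hrep⟩ := ν.2
    obtain ⟨k, hk, yv, gam, hyi, hgle, -, hyU, -, hclose, hrep2⟩ := hν
    have heq : maxPlus c z = maxPlus gam yv := by rw [← hrep, ← hrep2]
    have hcle' : ∀ j, c j ≤ 0 := by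
      intro j
      by_cases h : j = j0
      · rw [h, hc0]
      · exact (hcle j h).trans (neg_nonpos.mpr (Real.log_nonneg (by push_cast; linarith)))
    obtain ⟨j, hjz, hj0⟩ := key_lemma hm hk z c j0 hc0 hcle' yv gam hgle heq
    obtain ⟨i, hiU⟩ := hyU j
    have hlt := hclose i j hiU
    rw [hj0, sub_zero] at hlt
    have hii0 : i = i0 := by
      by_contra hne
      have h2n : 2 ≤ n := by
        by_contra h2
        have hi := i.isLt
        have hi0 := i0.isLt
        exact hne (Fin.ext (by omega))
      have hlam := hle i hne
      have hlog : Real.log 3 ≤ Real.log (n + 1) :=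
        Real.log_le_log (by norm_num)
          (by have h2n' : (2:ℝ) ≤ n := by exact_mod_cast h2n
              linarith)
      have : Real.log (n + 1) ≤ -lam i := by linarith
      have : -lam i ≤ |lam i| := neg_le_abs (lam i)
      linarith
    refine ⟨z j0, by rw [← hii0, ← hjz]; exact hiU, ?_⟩
    have hν' : ν = ⟨maxPlus c z, hrep ▸ ν.2⟩ := Subtype.ext hrep
    rw [hν', hr m hm z c j0 hzinj hc0 hcle _]
  · intro y hy
    obtain ⟨h, hnb, hrv⟩ := part1 y hy
    exact ⟨⟨maxPlus lam (Function.update x i0 y), h⟩, hnb, hrv⟩
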